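/- Suppose 𝓝 is a complex symplectic 2n×2n matrix without eigenvalue −1 and 𝓜 = (I − 𝓝)(I + 𝓝)^{-1}. Then I − 𝓝̄^{-1}𝓝 = 2(I − 𝓜̄)^{-1}(𝓜 − 𝓜̄)(I + 𝓜)^{-1}. -/

import Mathlib

open Matrix Complex

private lemma helper8 {R : Type*} [Ring R] [Algebra ℂ R]
    (x y p q r a b m m' : R)
    (h1 : (1 + x) * p = 1) (h3 : (1 + y) * q = 1) (h4 : q * (1 + y) = 1)
    (h5 : y * r = 1) (h6 : r * y = 1)
    (hm : m = (1 - x) * p) (hm' : m' = (1 - y) * q)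
    (ha : a * (1 - m') = 1) (hb : (1 + m) * b = 1) :
    1 - r * x = (2 : ℂ) • (a * (m - m') * b) := by
  have e1 : x * p = 1 - p := by
    have h := h1; rw [add_mul, one_mul] at h; exact eq_sub_of_add_eq' h
  have e2 : y * q = 1 - q := by
    have h := h3; rw [add_mul, one_mul] at h; exact eq_sub_of_add_eq' h
  have cq : y * q = q * y := by
    have hA := h3; have hB := h4
    rw [add_mul, one_mul] at hA; rw [mul_add, mul_one] at hB
    have : q + y * q = q + q * y := by rw [hA, hB]
    exact add_left_cancel this
  have qr : q * r = r * q := by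
    calc q * r = (r * y) * (q * r) := by rw [h6, one_mul]
    _ = r * ((y * q) * r) := by noncomm_ring
    _ = r * ((q * y) * r) := by rw [cq]
    _ = r * (q * (y * r)) := by rw [mul_assoc]
    _ = r * q := by rw [h5, mul_one]
  have t : y * q * r * x = q * x := by
    rw [mul_assoc y q r, qr, ← mul_assoc y r q, h5, one_mul]
  have c1 : 1 + m = 2 * p := by
    have h : (1 + m) - 2 * p = 1 - (1 + x) * p := by rw [hm]; noncomm_ring
    rw [h1, sub_self] at h
    exact sub_eq_zero.mp h
  have c2 : 1 - m' = 2 * (y * q) := by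
    have h : (1 - m') - 2 * (y * q) = 1 - (1 + y) * q := by rw [hm']; noncomm_ring
    rw [h3, sub_self] at h
    exact sub_eq_zero.mp h
  have key : (1 - m') * (1 - r * x) * (1 + m) = (m - m') + (m - m') := by
    rw [c1, c2, hm, hm']
    have l1 : 2 * (y * q) * (1 - r * x) * (2 * p)
        = 4 * ((y * q) * p) - 4 * ((y * q * r * x) * p) := by noncomm_ring
    have l2 : ((1 - x) * p - (1 - y) * q) + ((1 - x) * p - (1 - y) * q)
        = (p - x * p) + (p - x * p) - ((q - y * q) + (q - y * q)) := by noncomm_ring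
    rw [l1, t, mul_assoc q x p, l2, e1, e2]
    noncomm_ring
  have smul2 : (2 : ℂ) • (a * (m - m') * b) = a * ((m - m') + (m - m')) * b := by
    rw [two_smul ℂ (a * (m - m') * b)]; noncomm_ring
  rw [smul2, ← key]
  have reassoc : a * ((1 - m') * (1 - r * x) * (1 + m)) * b
      = (a * (1 - m')) * ((1 - r * x) * ((1 + m) * b)) := by noncomm_ring
  rw [reassoc, ha, hb, one_mul, mul_one]

theorem stmt_8 (n : ℕ) (N : Matrix (Fin n ⊕ Fin n) (Fin n ⊕ Fin n) ℂ)
    (hsymp : Nᵀ * (Matrix.fromBlocks 0 1 (-1) 0) * N = (Matrix.fromBlocks 0 1 (-1) 0 :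
      Matrix (Fin n ⊕ Fin n) (Fin n ⊕ Fin n) ℂ))
    (hN : IsUnit (1 + N))
    (M : Matrix (Fin n ⊕ Fin n) (Fin n ⊕ Fin n) ℂ)
    (hM : M = (1 - N) * (1 + N)⁻¹)
    (hM1 : IsUnit (1 + M)) (hM2 : IsUnit (1 + M.map (starRingEnd ℂ))) :
    1 - (N.map (starRingEnd ℂ))⁻¹ * N =
      (2 : ℂ) • ((1 - M.map (starRingEnd ℂ))⁻¹ *
        (M - M.map (starRingEnd ℂ)) * (1 + M)⁻¹) := by
  set J : Matrix (Fin n ⊕ Fin n) (Fin n ⊕ Fin n) ℂ := Matrix.fromBlocks 0 1 (-1) 0 with hJ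
  set N' : Matrix (Fin n ⊕ Fin n) (Fin n ⊕ Fin n) ℂ := N.map (starRingEnd ℂ) with hN'
  -- J² = -1
  have hJJ : J * J = -1 := by
    rw [hJ, Matrix.fromBlocks_multiply]
    simp [← Matrix.fromBlocks_one, Matrix.fromBlocks_neg]
  -- N is invertible
  have hBN : ((-J) * (Nᵀ * J)) * N = 1 := by
    rw [mul_assoc, hsymp, neg_mul, hJJ, neg_neg]
  have hNB : N * ((-J) * (Nᵀ * J)) = 1 := mul_eq_one_comm.mp hBN
  have hNu : IsUnit N := ⟨⟨N, (-J) * (Nᵀ * J), hNB, hBN⟩, rfl⟩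
  have hN'u : IsUnit N' := by
    simpa using hNu.map (RingHom.mapMatrix (starRingEnd ℂ))
  -- inverses of 1 + N and its conjugate
  have f1 : (1 + N) * (1 + N)⁻¹ = 1 :=
    Matrix.mul_nonsing_inv _ ((Matrix.isUnit_iff_isUnit_det _).mp hN)
  have f2 : (1 + N)⁻¹ * (1 + N) = 1 :=
    Matrix.nonsing_inv_mul _ ((Matrix.isUnit_iff_isUnit_det _).mp hN)
  set q : Matrix (Fin n ⊕ Fin n) (Fin n ⊕ Fin n) ℂ := ((1 + N)⁻¹).map (starRingEnd ℂ)
    with hq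
  have hmap : ∀ A B : Matrix (Fin n ⊕ Fin n) (Fin n ⊕ Fin n) ℂ, A * B = 1 →
      (A.map (starRingEnd ℂ)) * (B.map (starRingEnd ℂ)) = 1 := by
    intro A B h
    rw [← Matrix.map_mul, h, Matrix.map_one] <;> simp
  have h3 : (1 + N') * q = 1 := by
    have := hmap _ _ f1
    simpa [Matrix.map_add, Matrix.map_one] using this
  have h4 : q * (1 + N') = 1 := by
    have := hmap _ _ f2
    simpa [Matrix.map_add, Matrix.map_one] using this
  -- conjugate of M
  have hm' : M.map (starRingEnd ℂ) = (1 - N') * q := by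
    rw [hM, Matrix.map_mul]
    congr 1
    simp [Matrix.map_sub, Matrix.map_one]
    rfl
  -- inverses of N'
  have h5 : N' * N'⁻¹ = 1 :=
    Matrix.mul_nonsing_inv _ ((Matrix.isUnit_iff_isUnit_det _).mp hN'u)
  have h6 : N'⁻¹ * N' = 1 :=
    Matrix.nonsing_inv_mul _ ((Matrix.isUnit_iff_isUnit_det _).mp hN'u)
  -- inverse of 1 - M'
  have c2 : 1 - M.map (starRingEnd ℂ) = 2 * (N' * q) := by
    have h : (1 - M.map (starRingEnd ℂ)) - 2 * (N' * q) = 1 - (1 + N') * q := by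
      rw [hm']; noncomm_ring
    rw [h3, sub_self] at h
    exact sub_eq_zero.mp h
  have hW : (1 - M.map (starRingEnd ℂ)) * ((2 : ℂ)⁻¹ • ((1 + N') * N'⁻¹)) = 1 := by
    rw [c2, mul_smul_comm]
    have inner : (2 * (N' * q)) * ((1 + N') * N'⁻¹) = 2 := by
      have h : (2 * (N' * q)) * ((1 + N') * N'⁻¹)
          = 2 * (N' * ((q * (1 + N')) * N'⁻¹)) := by noncomm_ring
      rw [h, h4, one_mul, h5, mul_one]
    rw [inner]
    have h2m : (2 : ℂ) • (1 : Matrix (Fin n ⊕ Fin n) (Fin n ⊕ Fin n) ℂ) = 2 :=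
      (two_smul ℂ (1 : Matrix (Fin n ⊕ Fin n) (Fin n ⊕ Fin n) ℂ)).trans one_add_one_eq_two
    rw [← h2m, smul_smul]
    norm_num
  have ha : (1 - M.map (starRingEnd ℂ))⁻¹ * (1 - M.map (starRingEnd ℂ)) = 1 := by
    rw [Matrix.inv_eq_right_inv hW]
    exact mul_eq_one_comm.mp hW
  have hb : (1 + M) * (1 + M)⁻¹ = 1 :=
    Matrix.mul_nonsing_inv _ ((Matrix.isUnit_iff_isUnit_det _).mp hM1)
  exact helper8 N N' (1 + N)⁻¹ q N'⁻¹ (1 - M.map (starRingEnd ℂ))⁻¹ (1 + M)⁻¹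
    M (M.map (starRingEnd ℂ)) f1 h3 h4 h5 h6 hM hm' ha hb
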